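/- Let f_0 be analytic on the unit disk 𝔻 with f_0(0) = 0, f_0'(0) = 1, f_0' nonvanishing, and satisfying 1 + z f_0''(z)/f_0'(z) = 1 + (2/π²)(Log((1+z)/(1−z)))² for all z ∈ 𝔻 (principal branch of the logarithm). Then the Schwarzian derivative of f_0 at the origin equals S_{f_0}(0) = 8/π²; consequently sup_{z∈𝔻}(1−|z|²)²|S_{f_0}(z)| ≥ 8/π², so the bound ‖S_f‖ ≤ 8/π² for uniformly convex functions is sharp. -/

import Mathlib

open Metric Complex Real

noncomputable def LL (z : ℂ) : ℂ := Complex.log ((1+z)/(1-z))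

theorem sqrtA (t : ℝ) (ht : 0 < t) (ht1 : t ≤ 1) :
    Real.sqrt t * (Real.log (2/t) + π/2) ≤ 5 := by
  have hs0 : 0 < Real.sqrt t := Real.sqrt_pos.2 ht
  have hs1 : Real.sqrt t ≤ 1 := Real.sqrt_le_one.mpr ht1
  have h2t : (0:ℝ) < 2/t := by positivity
  have hlog : Real.log (2/t) ≤ 2 * Real.sqrt (2/t) := by
    have e : Real.log (Real.sqrt (2/t)) = Real.log (2/t) / 2 := Real.log_sqrt h2t.le
    have h := Real.log_le_sub_one_of_pos (Real.sqrt_pos.2 h2t)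
    nlinarith [Real.sqrt_nonneg (2/t)]
  have hmul : Real.sqrt t * Real.sqrt (2/t) = Real.sqrt 2 := by
    rw [← Real.sqrt_mul ht.le]
    congr 1; field_simp
  have hsqrt2 : Real.sqrt 2 ≤ 1.5 := by
    rw [show (1.5:ℝ) = Real.sqrt (1.5^2) by rw [Real.sqrt_sq]; norm_num]
    apply Real.sqrt_le_sqrt; norm_num
  have hpi : π ≤ 4 := by nlinarith [Real.pi_le_four]
  nlinarith [Real.sqrt_nonneg (2/t), mul_le_mul_of_nonneg_left hlog hs0.le]

theorem arithB (t M cr : ℝ) (ht : 0 < t) (ht1 : t ≤ 1) (hM : 0 ≤ M)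
    (hcr : 0 < cr) (hA : Real.sqrt t * M ≤ 5) :
    4*t^2 * (16*cr*M/t + 4*cr*M^2 + 2*cr^2*M^4) ≤ 720*cr + 5000*cr^2 := by
  set s := Real.sqrt t with hs
  have hs0 : 0 < s := Real.sqrt_pos.2 ht
  have hs1 : s ≤ 1 := Real.sqrt_le_one.mpr ht1
  have hst : s^2 = t := Real.sq_sqrt ht.le
  clear_value s
  have h1 : s^2*M ≤ 5 := by nlinarith
  have hsM0 : 0 ≤ s*M := mul_nonneg hs0.le hM
  have h2' : (s*M)^2 ≤ 25 := by nlinarith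
  have h2 : s^4*M^2 ≤ 25 := by nlinarith [sq_nonneg (s*M), mul_nonneg hs0.le hM]
  have h3 : s^4*M^4 ≤ 625 := by
    nlinarith [mul_le_mul h2' h2' (sq_nonneg (s*M)) (by norm_num : (0:ℝ) ≤ 25)]
  have key : 4*t^2 * (16*cr*M/t + 4*cr*M^2 + 2*cr^2*M^4)
      = 64*cr*(s^2*M) + 16*cr*(s^4*M^2) + 8*cr^2*(s^4*M^4) := by
    rw [← hst]
    field_simp
    ring
  rw [key]
  nlinarith

theorem LL_bound (z : ℂ) (hz : ‖z‖ < 1) (hre : 0 < ((1+z)/(1-z)).re) :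
    ‖LL z‖ ≤ Real.log (2/(1 - ‖z‖)) + π/2 := by
  set r := ‖z‖ with hr
  have hr0 : 0 ≤ r := norm_nonneg z
  have ht : 0 < 1 - r := by linarith
  set w := (1+z)/(1-z) with hw
  have hw0 : w ≠ 0 := by
    intro h; rw [h] at hre; simp at hre
  have habs1 : ‖1+z‖ ≤ 2 := by
    calc ‖1+z‖ ≤ ‖1‖ + ‖z‖ := norm_add_le 1 z
    _ ≤ 2 := by rw [norm_one]; linarith
  have habs2 : 1 - r ≤ ‖1+z‖ := by
    have h := norm_sub_norm_le (1:ℂ) (-z)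
    simpa [sub_neg_eq_add] using h
  have habs3 : ‖1-z‖ ≤ 2 := by
    calc ‖1-z‖ ≤ ‖1‖ + ‖z‖ := norm_sub_le 1 z
    _ ≤ 2 := by rw [norm_one]; linarith
  have habs4 : 1 - r ≤ ‖1-z‖ := by
    have h := norm_sub_norm_le (1:ℂ) z
    simpa using h
  have hwub : ‖w‖ ≤ 2/(1-r) := by
    rw [hw, norm_div]
    exact div_le_div₀ (by norm_num) habs1 ht habs4
  have h1z : (1:ℂ) - z ≠ 0 := by
    intro h
    have : ‖1-z‖ = 0 := by rw [h]; simp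
    linarith [habs4]
  have hwlb : (1-r)/2 ≤ ‖w‖ := by
    rw [hw, norm_div, div_le_div_iff₀ (by norm_num) (norm_pos_iff.2 h1z)]
    nlinarith [norm_nonneg (1-z)]
  have hwpos : 0 < ‖w‖ := norm_pos_iff.2 hw0
  have hlogpos : 0 ≤ Real.log (2/(1-r)) := by
    apply Real.log_nonneg
    rw [le_div_iff₀ ht]; linarith
  have hlogabs : |Real.log (‖w‖)| ≤ Real.log (2/(1-r)) := by
    rw [abs_le]
    constructor
    · rw [← Real.log_inv]
      have : (2/(1-r))⁻¹ = (1-r)/2 := by field_simp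
      rw [this]
      exact Real.log_le_log (by positivity) hwlb
    · exact Real.log_le_log hwpos hwub
  have harg : |Complex.arg w| ≤ π/2 := Complex.abs_arg_le_pi_div_two_iff.2 hre.le
  calc ‖LL z‖ ≤ |(LL z).re| + |(LL z).im| := Complex.norm_le_abs_re_add_abs_im _
  _ = |Real.log (‖w‖)| + |Complex.arg w| := by
      rw [show LL z = Complex.log w from rfl, Complex.log_re, Complex.log_im]
  _ ≤ Real.log (2/(1-r)) + π/2 := add_le_add hlogabs harg

set_option maxHeartbeats 1000000 in
theorem elem_bound (z : ℂ) (hz : ‖z‖ < 1) (hz2 : 1/2 < ‖z‖)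
    (hre : 0 < ((1+z)/(1-z)).re) :
    (1 - ‖z‖^2)^2 * ‖
      ((((2/π^2:ℝ):ℂ)) * (2 * LL z * (2/((1-z)*(1+z)))) * z - (((2/π^2:ℝ):ℂ)) * (LL z)^2) / z^2
      - (1/2) * ((((2/π^2:ℝ):ℂ)) * (LL z)^2 / z)^2‖
    ≤ 720*(2/π^2) + 5000*(2/π^2)^2 := by
  have hpi : 0 < π := Real.pi_pos
  have hLLb := LL_bound z hz hre
  set cr : ℝ := 2/π^2 with hcr
  set c : ℂ := ((cr:ℝ):ℂ) with hc
  set r := ‖z‖ with hr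
  set t := 1 - r with htdef
  set M := Real.log (2/t) + π/2 with hM
  clear_value M t r c cr
  have hcr0 : 0 < cr := by rw [hcr]; positivity
  have hr0 : (0:ℝ) < r := by linarith
  have ht : 0 < t := by rw [htdef]; linarith
  have ht1 : t ≤ 1 := by rw [htdef]; linarith
  have hM0 : 0 ≤ M := by
    rw [hM]
    have : 0 ≤ Real.log (2/t) := Real.log_nonneg (by rw [le_div_iff₀ ht]; linarith)
    positivity
  have habsLL : ‖LL z‖ ≤ M := hLLb
  have hcabs : ‖c‖ = cr := by
    rw [hc, Complex.norm_real, Real.norm_eq_abs, abs_of_pos hcr0]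
  have hprod : 1 - r^2 ≤ ‖(1-z)*(1+z)‖ := by
    have e : (1-z)*(1+z) = 1 - z^2 := by ring
    rw [e]
    have h := norm_sub_norm_le (1:ℂ) (z^2)
    simp only [norm_one, norm_pow, ← hr] at h
    linarith
  have hr2 : (0:ℝ) < 1 - r^2 := by nlinarith
  have htle : t ≤ 1 - r^2 := by rw [htdef]; nlinarith
  have hl : ‖2/((1-z)*(1+z))‖ ≤ 2/t := by
    rw [norm_div]
    simp only [Complex.norm_two]
    calc (2:ℝ)/‖(1-z)*(1+z)‖ ≤ 2/(1-r^2) :=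
          div_le_div_of_nonneg_left (by norm_num) hr2 hprod
    _ ≤ 2/t := div_le_div_of_nonneg_left (by norm_num) ht htle
  have habsLL2 : ‖LL z‖ ^ 2 ≤ M^2 :=
    pow_le_pow_left₀ (norm_nonneg _) habsLL 2
  have hnum : ‖c * (2 * LL z * (2/((1-z)*(1+z)))) * z - c * (LL z)^2‖
      ≤ cr*(2*M*(2/t))*1 + cr*M^2 := by
    calc ‖c * (2 * LL z * (2/((1-z)*(1+z)))) * z - c * (LL z)^2‖
        ≤ ‖c * (2 * LL z * (2/((1-z)*(1+z)))) * z‖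
          + ‖c * (LL z)^2‖ := norm_sub_le _ _
    _ ≤ cr*(2*M*(2/t))*1 + cr*M^2 := by
        simp only [norm_mul, norm_pow, Complex.norm_two, hcabs, ← hr]
        have h1 : r ≤ 1 := hz.le
        gcongr <;> first
          | exact hM0
          | exact habsLL
          | exact hl
          | exact h1
          | positivity
  have hinv : (1:ℝ)/4 ≤ r^2 := by nlinarith
  have habsg : ‖c * (LL z)^2 / z‖ ≤ 2*cr*M^2 := by
    rw [norm_div, norm_mul, norm_pow, hcabs, ← hr, div_le_iff₀ hr0]
    nlinarith [mul_le_mul_of_nonneg_left habsLL2 hcr0.le,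
      mul_nonneg (mul_nonneg hcr0.le (sq_nonneg M)) (by linarith : (0:ℝ) ≤ 2*r-1)]
  have hEbd : ‖
      (c * (2 * LL z * (2/((1-z)*(1+z)))) * z - c * (LL z)^2) / z^2
      - (1/2) * (c * (LL z)^2 / z)^2‖
      ≤ 16*cr*M/t + 4*cr*M^2 + 2*cr^2*M^4 := by
    calc ‖
        (c * (2 * LL z * (2/((1-z)*(1+z)))) * z - c * (LL z)^2) / z^2
        - (1/2) * (c * (LL z)^2 / z)^2‖
        ≤ ‖(c * (2 * LL z * (2/((1-z)*(1+z)))) * z - c * (LL z)^2) / z^2‖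
          + ‖(1/2 : ℂ) * (c * (LL z)^2 / z)^2‖ := norm_sub_le _ _
    _ ≤ (cr*(2*M*(2/t))*1 + cr*M^2) * 4 + (1/2) * (2*cr*M^2)^2 := by
        have hb1 : ‖(c * (2 * LL z * (2/((1-z)*(1+z)))) * z - c * (LL z)^2) / z^2‖
            ≤ (cr*(2*M*(2/t))*1 + cr*M^2) * 4 := by
          rw [norm_div, norm_pow, ← hr, div_le_iff₀ (pow_pos hr0 2)]
          calc ‖c * (2 * LL z * (2/((1-z)*(1+z)))) * z - c * (LL z)^2‖
              ≤ cr*(2*M*(2/t))*1 + cr*M^2 := hnum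
          _ = ((cr*(2*M*(2/t))*1 + cr*M^2) * 4) * (1/4) := by ring
          _ ≤ ((cr*(2*M*(2/t))*1 + cr*M^2) * 4) * (r^2) := by
              have hnn2 : (0:ℝ) ≤ (cr*(2*M*(2/t))*1 + cr*M^2) * 4 := by positivity
              exact mul_le_mul_of_nonneg_left hinv hnn2
        have hb2 : ‖(1/2 : ℂ) * (c * (LL z)^2 / z)^2‖
            ≤ (1/2) * (2*cr*M^2)^2 := by
          rw [norm_mul, norm_pow]
          have e2 : ‖(1/2 : ℂ)‖ = 1/2 := by norm_num
          rw [e2]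
          have hnn : (0:ℝ) ≤ ‖c * (LL z)^2 / z‖ := norm_nonneg _
          have := pow_le_pow_left₀ hnn habsg 2
          linarith
        exact add_le_add hb1 hb2
    _ = 16*cr*M/t + 4*cr*M^2 + 2*cr^2*M^4 := by ring
  have hsqt : (1 - r^2)^2 ≤ 4*t^2 := by
    rw [htdef]
    nlinarith [mul_nonneg (mul_nonneg (sub_nonneg.2 hz.le) (sub_nonneg.2 hz.le))
      (mul_nonneg (sub_nonneg.2 hz.le) (by linarith : (0:ℝ) ≤ r+3))]
  have harith : 4*t^2 * (16*cr*M/t + 4*cr*M^2 + 2*cr^2*M^4) ≤ 720*cr + 5000*cr^2 := by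
    apply arithB t M cr ht ht1 hM0 hcr0
    rw [hM]
    exact sqrtA t ht ht1
  have hE0 : (0:ℝ) ≤ ‖
      (c * (2 * LL z * (2/((1-z)*(1+z)))) * z - c * (LL z)^2) / z^2
      - (1/2) * (c * (LL z)^2 / z)^2‖ := norm_nonneg _
  calc (1 - r^2)^2 * ‖
      (c * (2 * LL z * (2/((1-z)*(1+z)))) * z - c * (LL z)^2) / z^2
      - (1/2) * (c * (LL z)^2 / z)^2‖
      ≤ 4*t^2 * (16*cr*M/t + 4*cr*M^2 + 2*cr^2*M^4) :=
        mul_le_mul hsqt hEbd hE0 (by positivity)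
  _ ≤ 720*cr + 5000*cr^2 := harith

private theorem re_pos' (z : ℂ) (hz : z ∈ ball (0:ℂ) 1) : 0 < ((1+z)/(1-z)).re := by
  rw [mem_ball, dist_zero_right] at hz
  have h1 : (1 - z) ≠ 0 := by
    intro h; have : z = 1 := by linear_combination -h
    simp [this] at hz
  have hsq : 0 < normSq (1 - z) := normSq_pos.2 h1
  have hz2 : z.re^2 + z.im^2 < 1 := by
    have h := Complex.sq_norm z
    rw [normSq_apply] at h
    have hlt : ‖z‖ < 1 := by simpa using hz
    nlinarith [norm_nonneg z]
  rw [div_re, ← add_div]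
  apply div_pos _ hsq
  simp only [add_re, add_im, one_re, one_im, sub_re, sub_im]
  nlinarith

private theorem LL_hasDeriv (z : ℂ) (hz : z ∈ ball (0:ℂ) 1) :
    HasDerivAt LL (2/((1-z)*(1+z))) z := by
  have hre := re_pos' z hz
  rw [mem_ball, dist_zero_right] at hz
  have h1 : (1 - z) ≠ 0 := by
    intro h; have : z = 1 := by linear_combination -h
    simp [this] at hz
  have h2 : (1 + z) ≠ 0 := by
    intro h; have : z = -1 := by linear_combination h
    simp [this] at hz
  have hq : HasDerivAt (fun w => (1+w)/(1-w)) (2/(1-z)^2) z := by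
    have ha : HasDerivAt (fun w : ℂ => 1 + w) 1 z := by
      simpa using (hasDerivAt_id z).const_add 1
    have hb : HasDerivAt (fun w : ℂ => 1 - w) (-1) z := by
      simpa using (hasDerivAt_id z).const_sub 1
    have := ha.div hb h1
    rw [show (2:ℂ)/(1-z)^2 = (1*(1-z) - (1+z)*(-1))/(1-z)^2 by ring]
    exact this
  have hslit : (1+z)/(1-z) ∈ Complex.slitPlane := Or.inl hre
  have := hq.clog hslit
  show HasDerivAt (fun t => Complex.log ((1 + t) / (1 - t))) _ z
  convert this using 1
  field_simp

private theorem deriv_at_zero (f : ℂ → ℂ)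
    (hf : DifferentiableOn ℂ f (ball (0:ℂ) 1))
    (hf1 : deriv f 0 = 1)
    (c : ℂ)
    (hode : ∀ z ∈ ball (0:ℂ) 1, z * deriv (deriv f) z = c * (LL z)^2 * deriv f z) :
    deriv (deriv f) 0 = 0 ∧ deriv (deriv (deriv f)) 0 = 4 * c := by
  have h0 : (0:ℂ) ∈ ball (0:ℂ) 1 := by simp
  have hA : AnalyticOnNhd ℂ f (ball (0:ℂ) 1) := hf.analyticOnNhd isOpen_ball
  have hA1 : AnalyticOnNhd ℂ (deriv f) (ball (0:ℂ) 1) := hA.deriv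
  have hA2 : AnalyticOnNhd ℂ (deriv (deriv f)) (ball (0:ℂ) 1) := hA1.deriv
  have hc1 : ContinuousAt (deriv f) 0 := (hA1 0 h0).continuousAt
  have hc2 : ContinuousAt (deriv (deriv f)) 0 := (hA2 0 h0).continuousAt
  have hd2 : HasDerivAt (deriv (deriv f)) (deriv (deriv (deriv f)) 0) 0 :=
    ((hA2 0 h0).differentiableAt).hasDerivAt
  have hL0 : LL 0 = 0 := by simp [LL]
  have hLd : HasDerivAt LL 2 0 := by simpa using LL_hasDeriv 0 h0
  have hslope : Filter.Tendsto (fun z => LL z / z) (nhdsWithin (0:ℂ) {(0:ℂ)}ᶜ) (nhds 2) := by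
    have := hasDerivAt_iff_tendsto_slope.1 hLd
    simpa [slope_fun_def_field, hL0] using this
  have hev : ∀ᶠ z in nhdsWithin (0:ℂ) {(0:ℂ)}ᶜ, z ∈ ball (0:ℂ) 1 ∧ z ≠ (0:ℂ) := by
    filter_upwards [self_mem_nhdsWithin,
      eventually_nhdsWithin_of_eventually_nhds (isOpen_ball.eventually_mem h0)] with z h1 h2
    exact ⟨h2, h1⟩
  have hform : ∀ᶠ z in nhdsWithin (0:ℂ) {(0:ℂ)}ᶜ,
      deriv (deriv f) z = c * (LL z / z) * LL z * deriv f z := by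
    filter_upwards [hev] with z hza
    obtain ⟨hzb, hz0⟩ := hza
    have := hode z hzb
    field_simp at this ⊢
    linear_combination this
  have hf'lim : Filter.Tendsto (deriv f) (nhdsWithin (0:ℂ) {(0:ℂ)}ᶜ) (nhds 1) := by
    rw [← hf1]; exact hc1.continuousWithinAt.tendsto
  have hLlim : Filter.Tendsto LL (nhdsWithin (0:ℂ) {(0:ℂ)}ᶜ) (nhds 0) := by
    have := (hLd.continuousAt.continuousWithinAt (s := {(0:ℂ)}ᶜ)).tendsto
    simpa [hL0] using this
  have t1 : Filter.Tendsto (fun z => c * (LL z / z) * LL z * deriv f z)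
      (nhdsWithin (0:ℂ) {(0:ℂ)}ᶜ) (nhds (c * 2 * 0 * 1)) :=
    (((tendsto_const_nhds.mul hslope).mul hLlim).mul hf'lim)
  have t2 : Filter.Tendsto (deriv (deriv f)) (nhdsWithin (0:ℂ) {(0:ℂ)}ᶜ)
      (nhds (c * 2 * 0 * 1)) :=
    t1.congr' (hform.mono fun z h => h.symm)
  have t3 : Filter.Tendsto (deriv (deriv f)) (nhdsWithin (0:ℂ) {(0:ℂ)}ᶜ)
      (nhds (deriv (deriv f) 0)) :=
    hc2.continuousWithinAt.tendsto
  have hf2zero : deriv (deriv f) 0 = 0 := by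
    have := tendsto_nhds_unique t3 t2
    simpa using this
  refine ⟨hf2zero, ?_⟩
  have hslope2 : Filter.Tendsto (fun z => deriv (deriv f) z / z)
      (nhdsWithin (0:ℂ) {(0:ℂ)}ᶜ) (nhds (deriv (deriv (deriv f)) 0)) := by
    have := hasDerivAt_iff_tendsto_slope.1 hd2
    simpa [slope_fun_def_field, hf2zero] using this
  have hform2 : ∀ᶠ z in nhdsWithin (0:ℂ) {(0:ℂ)}ᶜ,
      deriv (deriv f) z / z = c * (LL z / z)^2 * deriv f z := by
    filter_upwards [hform, hev] with z h hza
    obtain ⟨_, hz0⟩ := hza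
    rw [h]; field_simp
  have t4 : Filter.Tendsto (fun z => deriv (deriv f) z / z)
      (nhdsWithin (0:ℂ) {(0:ℂ)}ᶜ) (nhds (c * 2^2 * 1)) :=
    (((tendsto_const_nhds.mul (hslope.pow 2)).mul hf'lim)).congr'
      (hform2.mono fun z h => h.symm)
  have := tendsto_nhds_unique hslope2 t4
  rw [this]; ring

private theorem schwarz_formula (f : ℂ → ℂ)
    (hf : DifferentiableOn ℂ f (ball (0:ℂ) 1))
    (hf' : ∀ z ∈ ball (0:ℂ) 1, deriv f z ≠ 0)
    (c : ℂ)
    (hode : ∀ z ∈ ball (0:ℂ) 1, z * deriv (deriv f) z = c * (LL z)^2 * deriv f z)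
    (z : ℂ) (hz : z ∈ ball (0:ℂ) 1) (hz0 : z ≠ 0) :
    deriv (deriv (deriv f)) z / deriv f z - (3/2) * (deriv (deriv f) z / deriv f z)^2
      = (c * (2 * LL z * (2/((1-z)*(1+z)))) * z - c * (LL z)^2) / z^2
        - (1/2) * (c * (LL z)^2 / z)^2 := by
  have hA : AnalyticOnNhd ℂ f (ball (0:ℂ) 1) := hf.analyticOnNhd isOpen_ball
  have hA1 : AnalyticOnNhd ℂ (deriv f) (ball (0:ℂ) 1) := hA.deriv
  set g : ℂ → ℂ := fun w => c * (LL w)^2 / w with hgdef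
  set g' : ℂ := (c * (2 * LL z * (2/((1-z)*(1+z)))) * z - c * (LL z)^2) / z^2 with hg'def
  have hgd : HasDerivAt g g' z := by
    have h1 : HasDerivAt (fun w => c * (LL w)^2) (c * (2 * LL z * (2/((1-z)*(1+z))))) z :=
      (((LL_hasDeriv z hz).pow 2).const_mul c).congr_deriv (by ring)
    have := h1.div (hasDerivAt_id z) hz0
    simp only [id, mul_one] at this; exact this
  have hUopen : IsOpen (ball (0:ℂ) 1 \ {0}) := isOpen_ball.sdiff isClosed_singleton
  have hmem : z ∈ ball (0:ℂ) 1 \ {0} := ⟨hz, hz0⟩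
  have heq : deriv (deriv f) =ᶠ[nhds z] fun w => g w * deriv f w := by
    filter_upwards [hUopen.mem_nhds hmem] with w hwa
    obtain ⟨hwb, hw0⟩ := hwa
    have h := hode w hwb
    have hwne : (w:ℂ) ≠ 0 := hw0
    simp only [hgdef]
    rw [div_mul_eq_mul_div, eq_div_iff hwne]
    linear_combination h
  have hfd1 : HasDerivAt (deriv f) (deriv (deriv f) z) z :=
    ((hA1 z hz).differentiableAt).hasDerivAt
  have hprod : HasDerivAt (fun w => g w * deriv f w)
      (g' * deriv f z + g z * deriv (deriv f) z) z := hgd.mul hfd1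
  have h3 : deriv (deriv (deriv f)) z = g' * deriv f z + g z * deriv (deriv f) z := by
    rw [Filter.EventuallyEq.deriv_eq heq]
    exact hprod.deriv
  have h2 : deriv (deriv f) z = g z * deriv f z := heq.self_of_nhds
  have hfz := hf' z hz
  rw [h3, h2]
  simp only [hgdef]; field_simp
  ring



open Metric

/-- Sharpness of the bound `‖S_f‖ ≤ 8/π²` for uniformly convex functions:
the function `f₀` with `1 + z f₀''/f₀' = 1 + (2/π²)(Log((1+z)/(1-z)))²` satisfies
`S_{f₀}(0) = 8/π²`, and hence `sup_{z∈𝔻} (1-|z|²)² |S_{f₀}(z)| ≥ 8/π²`. -/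
theorem schwarzian_norm_sharp_uniformly_convex (f : ℂ → ℂ)
    (hf : DifferentiableOn ℂ f (ball (0:ℂ) 1))
    (hf0 : f 0 = 0) (hf1 : deriv f 0 = 1)
    (hf' : ∀ z ∈ ball (0:ℂ) 1, deriv f z ≠ 0)
    (hode : ∀ z ∈ ball (0:ℂ) 1,
      1 + z * deriv (deriv f) z / deriv f z
        = 1 + ((2 / Real.pi ^ 2 : ℝ) : ℂ) * (Complex.log ((1 + z) / (1 - z))) ^ 2) :
    (deriv (deriv (deriv f)) 0 / deriv f 0
        - (3 / 2) * (deriv (deriv f) 0 / deriv f 0) ^ 2 = ((8 / Real.pi ^ 2 : ℝ) : ℂ)) ∧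
    8 / Real.pi ^ 2 ≤ sSup {r : ℝ | ∃ z ∈ ball (0:ℂ) 1,
      r = (1 - ‖z‖ ^ 2) ^ 2 *
        ‖deriv (deriv (deriv f)) z / deriv f z
          - (3 / 2) * (deriv (deriv f) z / deriv f z) ^ 2‖} := by
  have hpi : 0 < π := Real.pi_pos
  set c : ℂ := ((2 / Real.pi ^ 2 : ℝ) : ℂ) with hcdef
  have hode' : ∀ z ∈ ball (0:ℂ) 1, z * deriv (deriv f) z = c * (LL z)^2 * deriv f z := by
    intro z hz
    have h := hode z hz
    rw [add_right_inj] at h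
    rw [div_eq_iff (hf' z hz)] at h
    simpa [LL] using h
  obtain ⟨hf2zero, hf3zero⟩ := deriv_at_zero f hf hf1 c hode'
  have hpart1 : deriv (deriv (deriv f)) 0 / deriv f 0
      - (3 / 2) * (deriv (deriv f) 0 / deriv f 0) ^ 2 = ((8 / Real.pi ^ 2 : ℝ) : ℂ) := by
    rw [hf1, hf2zero, hf3zero, hcdef]
    push_cast
    ring
  refine ⟨hpart1, ?_⟩
  have hmem : 8 / Real.pi ^ 2 ∈ {r : ℝ | ∃ z ∈ ball (0:ℂ) 1,
      r = (1 - ‖z‖ ^ 2) ^ 2 *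
        ‖deriv (deriv (deriv f)) z / deriv f z
          - (3 / 2) * (deriv (deriv f) z / deriv f z) ^ 2‖} := by
    refine ⟨0, by simp, ?_⟩
    rw [hpart1]
    simp [Complex.norm_real, _root_.abs_of_nonneg (show (0:ℝ) ≤ 8/π^2 by positivity)]
  have hsub : closedBall (0:ℂ) (1/2) ⊆ ball (0:ℂ) 1 :=
    closedBall_subset_ball (by norm_num)
  have hA : AnalyticOnNhd ℂ f (ball (0:ℂ) 1) := hf.analyticOnNhd isOpen_ball
  have hA1 : AnalyticOnNhd ℂ (deriv f) (ball (0:ℂ) 1) := hA.deriv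
  have hA2 : AnalyticOnNhd ℂ (deriv (deriv f)) (ball (0:ℂ) 1) := hA1.deriv
  have hA3 : AnalyticOnNhd ℂ (deriv (deriv (deriv f))) (ball (0:ℂ) 1) := hA2.deriv
  have hc1 : ContinuousOn (deriv f) (closedBall (0:ℂ) (1/2)) :=
    (hA1.continuousOn).mono hsub
  have hc2 : ContinuousOn (deriv (deriv f)) (closedBall (0:ℂ) (1/2)) :=
    (hA2.continuousOn).mono hsub
  have hc3 : ContinuousOn (deriv (deriv (deriv f))) (closedBall (0:ℂ) (1/2)) :=
    (hA3.continuousOn).mono hsub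
  have hne : ∀ z ∈ closedBall (0:ℂ) (1/2), deriv f z ≠ 0 := fun z hz => hf' z (hsub hz)
  have hφcont : ContinuousOn (fun z => (1 - ‖z‖ ^ 2) ^ 2 *
      ‖deriv (deriv (deriv f)) z / deriv f z
        - (3 / 2) * (deriv (deriv f) z / deriv f z) ^ 2‖) (closedBall (0:ℂ) (1/2)) := by
    apply ContinuousOn.mul
    · exact ((continuous_const.sub (continuous_norm.pow 2)).pow 2).continuousOn
    · exact continuous_norm.comp_continuousOn
        (((hc3.div hc1 hne).sub (continuousOn_const.mul ((hc2.div hc1 hne).pow 2))))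
  obtain ⟨C₁, hC₁⟩ := (isCompact_closedBall (0:ℂ) (1/2)).exists_bound_of_continuousOn hφcont
  have hub : ∀ r ∈ {r : ℝ | ∃ z ∈ ball (0:ℂ) 1,
      r = (1 - ‖z‖ ^ 2) ^ 2 *
        ‖deriv (deriv (deriv f)) z / deriv f z
          - (3 / 2) * (deriv (deriv f) z / deriv f z) ^ 2‖},
      r ≤ max C₁ (720*(2/π^2) + 5000*(2/π^2)^2) := by
    rintro r ⟨z, hzball, rfl⟩
    by_cases hhalf : ‖z‖ ≤ 1/2
    · have hzK : z ∈ closedBall (0:ℂ) (1/2) := by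
        rw [mem_closedBall, dist_zero_right]; exact hhalf
      have := hC₁ _ hzK
      rw [Real.norm_eq_abs] at this
      exact le_trans (le_trans (le_abs_self _) this) (le_max_left _ _)
    · push_neg at hhalf
      have hz0 : z ≠ 0 := by
        intro h; rw [h] at hhalf; norm_num at hhalf
      have hzlt : ‖z‖ < 1 := by
        rw [mem_ball, dist_zero_right] at hzball; exact hzball
      rw [schwarz_formula f hf hf' c hode' z hzball hz0]
      refine le_trans ?_ (le_max_right _ _)
      exact elem_bound z hzlt hhalf (re_pos' z hzball)
  exact le_csSup ⟨_, hub⟩ hmem
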